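/- arXiv:math/0502472 — 2 statements merged into one kernel-verified Lean document; each statement's English description precedes it below -/
import Mathlib

section
/- For every integer l ≥ 1 there exists a natural number s such that ∏_{i=1}^{l} (9^l − 9^{i−1}) = 2^(ν₂(l!)+3l)·(2s+1); equivalently, the 2-adic valuation of ∏_{i=1}^{l} (9^l − 9^{i−1}) equals ν₂(l!) + 3l. -/
open Finset

lemma v2_prod (s : Finset ℕ) (f : ℕ → ℕ) (hf : ∀ i ∈ s, f i ≠ 0) :
    padicValNat 2 (∏ i ∈ s, f i) = ∑ i ∈ s, padicValNat 2 (f i) := by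
  classical
  induction s using Finset.induction with
  | empty => simp
  | insert a t hx ih =>
    rw [Finset.prod_insert hx, Finset.sum_insert hx,
      padicValNat.mul (hf a (mem_insert_self a t))
        (Finset.prod_ne_zero_iff.2 fun i hi => hf i (mem_insert_of_mem hi)),
      ih fun i hi => hf i (mem_insert_of_mem hi)]

lemma v2_nine_pow_sub_one (k : ℕ) (hk : k ≠ 0) :
    padicValNat 2 (9 ^ k - 1) = 3 + padicValNat 2 k := by
  have h9 : (9 : ℕ) ^ k = 3 ^ (2 * k) := by rw [pow_mul]; norm_num
  have h1 : (1 : ℕ) = 1 ^ (2 * k) := (one_pow _).symm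
  have key := padicValNat.pow_two_sub_pow (x := 3) (y := 1) (by norm_num) (by norm_num)
    (by norm_num) (n := 2 * k) (by omega) ⟨k, by ring⟩
  have h2k : padicValNat 2 (2 * k) = 1 + padicValNat 2 k := by
    rw [padicValNat.mul (by norm_num) hk, padicValNat.self (by norm_num)]
  rw [one_pow] at key
  rw [h9]
  have h4 : padicValNat 2 (3 + 1) = 2 := by
    rw [show (3 + 1 : ℕ) = 2 ^ 2 by norm_num, padicValNat.prime_pow]
  have h2 : padicValNat 2 (3 - 1) = 1 := by
    rw [show (3 - 1 : ℕ) = 2 ^ 1 by norm_num, padicValNat.prime_pow]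
  omega

lemma v2_factorial (l : ℕ) :
    padicValNat 2 (Nat.factorial l) = ∑ i ∈ Finset.Icc 1 l, padicValNat 2 i := by
  have : Nat.factorial l = ∏ i ∈ Finset.Icc 1 l, i := by
    induction l with
    | zero => simp
    | succ n ih =>
      rw [Nat.factorial_succ, ih, Finset.prod_Icc_succ_top (by omega)]
      ring
  rw [this, v2_prod]
  intro i hi
  simp only [Finset.mem_Icc] at hi
  omega

theorem prod_nine_pow_sub (l : ℕ) (hl : 1 ≤ l) :
    ∃ s : ℕ, ∏ i ∈ Finset.Icc 1 l, (9 ^ l - 9 ^ (i - 1)) =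
      2 ^ (padicValNat 2 (Nat.factorial l) + 3 * l) * (2 * s + 1) := by
  set N := ∏ i ∈ Finset.Icc 1 l, (9 ^ l - 9 ^ (i - 1)) with hN
  have hfac : ∀ i ∈ Finset.Icc 1 l, 9 ^ l - 9 ^ (i - 1) ≠ 0 := by
    intro i hi
    simp only [Finset.mem_Icc] at hi
    have : (9:ℕ) ^ (i - 1) < 9 ^ l := Nat.pow_lt_pow_right (by norm_num) (by omega)
    omega
  have hN0 : N ≠ 0 := Finset.prod_ne_zero_iff.2 hfac
  have hv : padicValNat 2 N = padicValNat 2 (Nat.factorial l) + 3 * l := by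
    rw [hN, v2_prod _ _ hfac]
    have hterm : ∀ i ∈ Finset.Icc 1 l,
        padicValNat 2 (9 ^ l - 9 ^ (i - 1)) = 3 + padicValNat 2 (l + 1 - i) := by
      intro i hi
      simp only [Finset.mem_Icc] at hi
      have hsplit : (9:ℕ) ^ l - 9 ^ (i - 1) = 9 ^ (i - 1) * (9 ^ (l + 1 - i) - 1) := by
        rw [Nat.mul_sub, mul_one, ← pow_add]
        congr 2
        omega
      have h1 : (9:ℕ) ^ (l + 1 - i) - 1 ≠ 0 := by
        have : (1:ℕ) < 9 ^ (l + 1 - i) := Nat.one_lt_pow (by omega) (by norm_num)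
        omega
      rw [hsplit, padicValNat.mul (pow_ne_zero _ (by norm_num)) h1,
        v2_nine_pow_sub_one _ (by omega)]
      have hodd : padicValNat 2 (9 ^ (i - 1)) = 0 := by
        rw [padicValNat.eq_zero_iff]
        right; right
        intro h
        have := Nat.Prime.dvd_of_dvd_pow Nat.prime_two h
        omega
      omega
    rw [Finset.sum_congr rfl hterm, Finset.sum_add_distrib, Finset.sum_const,
      Nat.card_Icc]
    have hre : ∑ i ∈ Finset.Icc 1 l, padicValNat 2 (l + 1 - i)
        = ∑ i ∈ Finset.Icc 1 l, padicValNat 2 i := by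
      apply Finset.sum_nbij' (fun i => l + 1 - i) (fun i => l + 1 - i) <;>
        intro a ha <;> simp only [Finset.mem_Icc] at * <;> omega
    rw [hre, ← v2_factorial]
    simp only [smul_eq_mul, Nat.add_sub_cancel]
    omega
  have hodd : ¬ 2 ∣ N / 2 ^ (N.factorization 2) := Nat.not_dvd_ordCompl Nat.prime_two hN0
  have heq : 2 ^ (N.factorization 2) * (N / 2 ^ (N.factorization 2)) = N :=
    Nat.ordProj_mul_ordCompl_eq_self N 2
  have hodd' : Odd (N / 2 ^ (N.factorization 2)) := Nat.odd_iff.mpr (by omega)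
  obtain ⟨t, ht⟩ := hodd'
  refine ⟨t, ?_⟩
  have hfact : N.factorization 2 = padicValNat 2 N := Nat.factorization_def N Nat.prime_two
  rw [hfact, hv] at heq ht
  rw [← heq, ht]
end

section
/- For every integer k ≥ 1 there exists a polynomial P in two variables over ℚ, all of whose coefficients have nonnegative 2-adic valuation (i.e. coefficients that are 2-adic integers), such that f_{4k} = P(u/2, w/4) in ℚ[u,w]; moreover there is no such polynomial Q with f_{4k} = 2·Q(u/2, w/4) (that is, f_{4k} lies in ℤ₂[u/2, w/4] but 2^{2k−α(k)−1}·c_{4k} does not). -/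
open MvPolynomial

/-- ν₂ : the 2-adic valuation of a natural number. -/
noncomputable def ν₂ (n : ℕ) : ℕ := padicValNat 2 n

/-- α : the number of 1's in the binary expansion of a natural number. -/
def α (n : ℕ) : ℕ := (Nat.digits 2 n).sum

/-- The variable u (degree 2 Bott class). -/
noncomputable def u : MvPolynomial (Fin 2) ℚ := X 0

/-- The variable w (playing the role of v²). -/
noncomputable def w : MvPolynomial (Fin 2) ℚ := X 1

/-- ψ : the ℚ-algebra endomorphism with ψ(u) = u, ψ(w) = 9w,
the action of 1 ∧ ψ³ on homotopy modulo torsion. -/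
noncomputable def ψ : MvPolynomial (Fin 2) ℚ →ₐ[ℚ] MvPolynomial (Fin 2) ℚ :=
  MvPolynomial.aeval ![u, 9 * w]

/-- c k is the element c_{4k} = ∏_{i=1}^{k} (w - 9^{i-1}u²)/(9^k - 9^{i-1}); c 0 = 1. -/
noncomputable def c (k : ℕ) : MvPolynomial (Fin 2) ℚ :=
  ∏ i ∈ Finset.Icc 1 k, (C (((9 : ℚ) ^ k - 9 ^ (i - 1))⁻¹) * (w - C ((9 : ℚ) ^ (i - 1)) * u ^ 2))

/-- f k is the element f_{4k} = 2^{2k - α(k)} c_{4k}. -/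
noncomputable def f (k : ℕ) : MvPolynomial (Fin 2) ℚ :=
  C ((2 : ℚ) ^ (2 * k - α k)) * c k

/-- g k l is the element g_{4k,4l} (for l ≤ k). -/
noncomputable def g (k l : ℕ) : MvPolynomial (Fin 2) ℚ :=
  if (4 * l - α l : ℤ) ≤ 2 * k then
    u ^ (2 * k + α l - 4 * l) * (C ((2 : ℚ)⁻¹) * u) ^ (2 * l - α l) * f l
  else
    (C ((2 : ℚ)⁻¹) * u) ^ (2 * (k - l)) * f l

/- ## Auxiliary lemmas -/

lemma nu9 (n : ℕ) (hn : n ≠ 0) : padicValNat 2 (9^n - 1) = 3 + padicValNat 2 n := by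
  have h9 : (9:ℕ)^n = 3^(2*n) := by rw [pow_mul]; norm_num
  have h := padicValNat.pow_two_sub_pow (x := 3) (y := 1) (by norm_num) (by norm_num)
    (by norm_num) (n := 2*n) (by omega) ⟨n, by ring⟩
  simp only [one_pow] at h
  have h2 : padicValNat 2 (2*n) = 1 + padicValNat 2 n := by
    rw [padicValNat.mul (by norm_num) hn]
    simp [padicValNat.self]
  have h4 : padicValNat 2 4 = 2 := by
    rw [show (4:ℕ) = 2^2 by norm_num, padicValNat.prime_pow]
  rw [h2, h4] at h
  norm_num at h
  rw [h9]
  omega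

lemma nufact_sum (k : ℕ) :
    padicValNat 2 (Nat.factorial k) = ∑ j ∈ Finset.range k, padicValNat 2 (j+1) := by
  induction k with
  | zero => simp
  | succ k ih =>
    rw [Nat.factorial_succ, padicValNat.mul (by omega) (Nat.factorial_ne_zero k),
      Finset.sum_range_succ, ih]
    ring

lemma nu_term (k j : ℕ) (hj : j < k) :
    padicValNat 2 (9^k - 9^j) = 3 + padicValNat 2 (k - j) := by
  have hfac : (9:ℕ)^k - 9^j = 9^j * (9^(k-j) - 1) := by
    rw [Nat.mul_sub, mul_one, ← pow_add]
    congr 2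
    omega
  have hodd : ¬ (2 ∣ (9:ℕ)^j) := by
    have h9 : (9:ℕ)^j % 2 = 1 := by
      rw [Nat.pow_mod]
      norm_num
    omega
  have hne : (9:ℕ)^(k-j) - 1 ≠ 0 := by
    have : (9:ℕ)^1 ≤ 9^(k-j) := Nat.pow_le_pow_right (by norm_num) (by omega)
    omega
  rw [hfac, padicValNat.mul (by positivity) hne,
    padicValNat.eq_zero_of_not_dvd hodd, nu9 _ (by omega)]
  omega

lemma termpos (k j : ℕ) (hj : j < k) : (9:ℕ)^j < 9^k := Nat.pow_lt_pow_right (by norm_num) hj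

lemma nuD (k : ℕ) :
    padicValNat 2 (∏ j ∈ Finset.range k, ((9:ℕ)^k - 9^j)) = 4*k - (Nat.digits 2 k).sum := by
  have hne : ∀ j ∈ Finset.range k, (9:ℕ)^k - 9^j ≠ 0 := by
    intro j hj
    have := termpos k j (Finset.mem_range.mp hj)
    omega
  have h1 : (∏ j ∈ Finset.range k, ((9:ℕ)^k - 9^j)).factorization 2
      = ∑ j ∈ Finset.range k, ((9:ℕ)^k - 9^j).factorization 2 := by
    rw [Nat.factorization_prod hne]
    simp
  rw [← Nat.factorization_def _ Nat.prime_two, h1]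
  have h2 : ∀ j ∈ Finset.range k, ((9:ℕ)^k - 9^j).factorization 2
      = 3 + padicValNat 2 (k - j) := by
    intro j hj
    rw [Nat.factorization_def _ Nat.prime_two, nu_term k j (Finset.mem_range.mp hj)]
  rw [Finset.sum_congr rfl h2, Finset.sum_add_distrib, Finset.sum_const, Finset.card_range]
  have h3 : ∑ j ∈ Finset.range k, padicValNat 2 (k - j)
      = ∑ j ∈ Finset.range k, padicValNat 2 (j+1) := by
    rw [← Finset.sum_range_reflect]
    apply Finset.sum_congr rfl
    intro j hj
    congr 1
    have := Finset.mem_range.mp hj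
    omega
  rw [h3, ← nufact_sum, smul_eq_mul]
  have h4 := sub_one_mul_padicValNat_factorial (p := 2) k
  have h5 := Nat.digit_sum_le 2 k
  omega

lemma coeff_top {R : Type*} [CommRing R] (s : Finset ℕ) (a : ℕ → R) :
    MvPolynomial.coeff (Finsupp.single (1 : Fin 2) s.card)
      (∏ i ∈ s, (X 1 - C (a i) * X 0 ^ 2) : MvPolynomial (Fin 2) R) = 1 := by
  classical
  induction s using Finset.induction with
  | empty => simp
  | @insert j s hj ih =>
    rw [Finset.prod_insert hj, Finset.card_insert_of_notMem hj, sub_mul, coeff_sub]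
    have h1 : Finsupp.single (1:Fin 2) (s.card + 1)
        = Finsupp.single (1:Fin 2) 1 + Finsupp.single (1:Fin 2) s.card := by
      rw [← Finsupp.single_add]
      congr 1
      omega
    rw [h1, coeff_X_mul, ih]
    have h2 : MvPolynomial.coeff (Finsupp.single (1:Fin 2) 1 + Finsupp.single (1:Fin 2) s.card)
        ((C (a j) * X 0 ^ 2) * ∏ i ∈ s, (X 1 - C (a i) * X 0 ^ 2) : MvPolynomial (Fin 2) R)
        = 0 := by
      rw [mul_assoc, coeff_C_mul, pow_two, mul_assoc, coeff_X_mul']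
      rw [← Finsupp.single_add]
      simp [Finsupp.single_apply]
    rw [h2]
    ring

theorem f_integral (k : ℕ) (hk : 1 ≤ k) :
    (∃ P : MvPolynomial (Fin 2) ℚ,
      (∀ m, 0 ≤ padicValRat 2 (P.coeff m)) ∧
      f k = MvPolynomial.aeval ![C ((2 : ℚ)⁻¹) * u, C ((4 : ℚ)⁻¹) * w] P) ∧
    ¬ (∃ Q : MvPolynomial (Fin 2) ℚ,
      (∀ m, 0 ≤ padicValRat 2 (Q.coeff m)) ∧
      f k = C (2 : ℚ) * MvPolynomial.aeval ![C ((2 : ℚ)⁻¹) * u, C ((4 : ℚ)⁻¹) * w] Q) := by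
  classical
  set A : Fin 2 → MvPolynomial (Fin 2) ℚ := ![C ((2:ℚ)⁻¹) * u, C ((4:ℚ)⁻¹) * w] with hA
  -- the denominator
  set D : ℕ := ∏ j ∈ Finset.range k, ((9:ℕ)^k - 9^j) with hD
  have hDne : D ≠ 0 := by
    rw [hD]
    apply Finset.prod_ne_zero_iff.mpr
    intro j hj
    have := termpos k j (Finset.mem_range.mp hj)
    omega
  set v : ℕ := 4*k - (Nat.digits 2 k).sum with hv
  have hnuD : padicValNat 2 D = v := nuD k
  set D' : ℕ := D / 2 ^ v with hD'
  have hDeq : D = 2^v * D' := by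
    rw [hD', ← hnuD, ← Nat.factorization_def _ Nat.prime_two]
    exact (Nat.ordProj_mul_ordCompl_eq_self D 2).symm
  have hD'odd : ¬ (2 ∣ D') := by
    rw [hD', ← hnuD, ← Nat.factorization_def _ Nat.prime_two]
    exact Nat.not_dvd_ordCompl Nat.prime_two hDne
  have hD'ne : D' ≠ 0 := by
    intro h
    rw [h, mul_zero] at hDeq
    exact hDne hDeq
  have hD'q : ((D':ℚ)) ≠ 0 := Nat.cast_ne_zero.mpr hD'ne
  -- the polynomials
  set PZ : MvPolynomial (Fin 2) ℤ :=
    ∏ j ∈ Finset.range k, (X 1 - C ((9:ℤ)^j) * X 0 ^ 2) with hPZ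
  set Pq : MvPolynomial (Fin 2) ℚ :=
    ∏ j ∈ Finset.range k, (X 1 - C ((9:ℚ)^j) * X 0 ^ 2) with hPq
  have hmap : MvPolynomial.map (Int.castRingHom ℚ) PZ = Pq := by
    rw [hPZ, hPq, map_prod]
    apply Finset.prod_congr rfl
    intro j hj
    simp only [map_sub, map_mul, map_pow, MvPolynomial.map_C, MvPolynomial.map_X,
      map_ofNat]
  set P : MvPolynomial (Fin 2) ℚ := C ((D':ℚ)⁻¹) * Pq with hP
  have hcoeffP : ∀ m, P.coeff m = ((D':ℚ))⁻¹ * ((PZ.coeff m : ℤ) : ℚ) := by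
    intro m
    rw [hP, coeff_C_mul, ← hmap, MvPolynomial.coeff_map]
    rfl
  -- integrality of P
  have hPint : ∀ m, 0 ≤ padicValRat 2 (P.coeff m) := by
    intro m
    rw [hcoeffP m]
    by_cases h0 : PZ.coeff m = 0
    · simp [h0, padicValRat.zero]
    · rw [padicValRat.mul (inv_ne_zero hD'q) (by exact_mod_cast h0),
        padicValRat.inv, padicValRat.of_nat,
        padicValNat.eq_zero_of_not_dvd hD'odd, padicValRat.of_int]
      simp
  -- the key scalar identity
  have hcastD : ((D:ℕ):ℚ) = ∏ j ∈ Finset.range k, ((9:ℚ)^k - 9^j) := by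
    rw [hD, Nat.cast_prod]
    apply Finset.prod_congr rfl
    intro j hj
    have := termpos k j (Finset.mem_range.mp hj)
    push_cast [Nat.cast_sub this.le]
    ring
  have hαk : (Nat.digits 2 k).sum ≤ k := Nat.digit_sum_le 2 k
  have hexp : (2:ℚ)^(2*k - α k) * 4^k = 2^v := by
    rw [show (4:ℚ) = 2^2 by norm_num, ← pow_mul, ← pow_add]
    congr 1
    simp only [α, hv]
    omega
  have hDq : ((D:ℕ):ℚ) ≠ 0 := Nat.cast_ne_zero.mpr hDne
  have hscal : (2:ℚ)^(2*k - α k) * ((D:ℕ):ℚ)⁻¹ = (D':ℚ)⁻¹ * ((4:ℚ)⁻¹)^k := by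
    have h2 : ((D:ℕ):ℚ) = 2^v * D' := by exact_mod_cast congrArg (Nat.cast : ℕ → ℚ) hDeq
    rw [h2]
    field_simp
    rw [← hexp]
    ring_nf
    rw [one_div, inv_pow, mul_comm _ ((4:ℚ) ^ k), ← mul_assoc, mul_inv_cancel₀ (by positivity), one_mul]
  -- the evaluation identity
  have haevalP : MvPolynomial.aeval A P
      = C ((D':ℚ)⁻¹ * ((4:ℚ)⁻¹)^k) * ∏ j ∈ Finset.range k, (w - C ((9:ℚ)^j) * u^2) := by
    rw [hP, map_mul, aeval_C, MvPolynomial.algebraMap_eq, hPq, map_prod]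
    have hfac : ∀ j ∈ Finset.range k,
        MvPolynomial.aeval A (X 1 - C ((9:ℚ)^j) * X 0 ^ 2)
          = C ((4:ℚ)⁻¹) * (w - C ((9:ℚ)^j) * u^2) := by
      intro j hj
      have e0 : MvPolynomial.aeval (R := ℚ) A (X (0:Fin 2)) = C ((2:ℚ)⁻¹) * u := by
        rw [aeval_X, hA]
        rfl
      have e1 : MvPolynomial.aeval (R := ℚ) A (X (1:Fin 2)) = C ((4:ℚ)⁻¹) * w := by
        rw [aeval_X, hA]
        rfl
      simp only [map_sub, map_mul, map_pow, aeval_C, MvPolynomial.algebraMap_eq, C_pow]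
      rw [e0, e1, mul_pow]
      rw [show (C ((2:ℚ)⁻¹))^2 = (C ((4:ℚ)⁻¹) : MvPolynomial (Fin 2) ℚ) by
        rw [← C_pow]
        congr 1
        norm_num]
      ring
    rw [Finset.prod_congr rfl hfac, Finset.prod_mul_distrib, Finset.prod_const,
      Finset.card_range, ← C_pow, ← mul_assoc, ← C_mul]
  have hfk : f k = C ((2:ℚ)^(2*k - α k) * ((D:ℕ):ℚ)⁻¹)
      * ∏ j ∈ Finset.range k, (w - C ((9:ℚ)^j) * u^2) := by
    rw [f, c]
    have hre : ∏ i ∈ Finset.Icc 1 k,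
        (C (((9 : ℚ) ^ k - 9 ^ (i - 1))⁻¹) * (w - C ((9 : ℚ) ^ (i - 1)) * u ^ 2))
        = ∏ j ∈ Finset.range k,
        (C (((9 : ℚ) ^ k - 9 ^ j)⁻¹) * (w - C ((9 : ℚ) ^ j) * u ^ 2)) := by
      rw [show Finset.Icc 1 k = Finset.Ico 1 (k+1) by rw [Finset.Ico_add_one_right_eq_Icc],
        Finset.prod_Ico_eq_prod_range]
      simp
    have hC : (∏ x ∈ Finset.range k, C (((9:ℚ)^k - 9^x)⁻¹) : MvPolynomial (Fin 2) ℚ)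
        = C (((D:ℕ):ℚ)⁻¹) := by
      rw [← map_prod (C : ℚ →+* MvPolynomial (Fin 2) ℚ), Finset.prod_inv_distrib, ← hcastD]
    rw [hre, Finset.prod_mul_distrib, hC, ← mul_assoc, ← C_mul]
  have hfeqP : f k = MvPolynomial.aeval A P := by
    rw [hfk, haevalP, hscal]
  refine ⟨⟨P, hPint, hfeqP⟩, ?_⟩
  -- negation part
  rintro ⟨Q, hQint, hQeq⟩
  -- injectivity of aeval A
  set B : Fin 2 → MvPolynomial (Fin 2) ℚ := ![C (2:ℚ) * X 0, C (4:ℚ) * X 1] with hB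
  have hcomp : ∀ p : MvPolynomial (Fin 2) ℚ,
      MvPolynomial.aeval B (MvPolynomial.aeval A p) = p := by
    intro p
    have h : (MvPolynomial.aeval (R := ℚ) B).comp (MvPolynomial.aeval A)
        = AlgHom.id ℚ (MvPolynomial (Fin 2) ℚ) := by
      apply MvPolynomial.algHom_ext
      intro i
      fin_cases i <;>
      · simp [hA, hB, u, w, MvPolynomial.algebraMap_eq]
        rw [← mul_assoc, ← C_mul]
        norm_num
    have := DFunLike.congr_fun h p
    simpa using this
  have hPQ : P = C (2:ℚ) * Q := by
    have h1 : MvPolynomial.aeval A P = MvPolynomial.aeval A (C (2:ℚ) * Q) := by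
      rw [← hfeqP, hQeq, map_mul, aeval_C, MvPolynomial.algebraMap_eq]
    have := congrArg (MvPolynomial.aeval B) h1
    rwa [hcomp, hcomp] at this
  -- coefficient at X1^k
  have htop : P.coeff (Finsupp.single (1 : Fin 2) k) = (D':ℚ)⁻¹ := by
    rw [hcoeffP]
    have h1 := coeff_top (Finset.range k) (fun j => (9:ℤ)^j)
    rw [Finset.card_range] at h1
    rw [hPZ, h1]
    norm_num
  have htop2 : (D':ℚ)⁻¹ = 2 * Q.coeff (Finsupp.single (1 : Fin 2) k) := by
    rw [← htop, hPQ, coeff_C_mul]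
  have hq0 : Q.coeff (Finsupp.single (1 : Fin 2) k) ≠ 0 := by
    intro h
    rw [h, mul_zero] at htop2
    exact (inv_ne_zero hD'q) htop2
  have hval : padicValRat 2 ((D':ℚ)⁻¹) = 0 := by
    rw [padicValRat.inv, padicValRat.of_nat, padicValNat.eq_zero_of_not_dvd hD'odd]
    norm_num
  have hval2 : padicValRat 2 ((2:ℚ) * Q.coeff (Finsupp.single (1 : Fin 2) k))
      = 1 + padicValRat 2 (Q.coeff (Finsupp.single (1 : Fin 2) k)) := by
    rw [padicValRat.mul (by norm_num) hq0]
    have h2v : padicValRat 2 (2:ℚ) = 1 := by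
      simpa using padicValRat.self (p := 2) (by norm_num)
    rw [h2v]
  have hQv := hQint (Finsupp.single (1 : Fin 2) k)
  rw [htop2, hval2] at hval
  omega
end
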